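/- Two distinct extremal invariant states of a quantum dynamical semigroup have different supports. Equivalently: if ρ₁ and ρ₂ are extremal points of the convex set of invariant states and supp(ρ₁) = supp(ρ₂), then ρ₁ = ρ₂. -/

import Mathlib

open Matrix
open scoped ComplexOrder


lemma quad_real {n : ℕ} {M : Matrix (Fin n) (Fin n) ℂ} (hM : M.PosSemidef) (x : Fin n → ℂ) :
    star x ⬝ᵥ M *ᵥ x = (((star x ⬝ᵥ M *ᵥ x).re : ℝ) : ℂ) := by
  have h := hM.dotProduct_mulVec_nonneg x
  rw [Complex.le_def] at h
  simp at h
  exact Complex.ext rfl (by simp [h.2.symm])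

lemma cross_zero {n : ℕ} {M : Matrix (Fin n) (Fin n) ℂ} (hM : M.IsHermitian) (v w : Fin n → ℂ)
    (hw : M *ᵥ w = 0) : star (v + w) ⬝ᵥ M *ᵥ (v + w) = star v ⬝ᵥ M *ᵥ v := by
  have hwv : star w ᵥ* M = 0 := by
    rw [← hM.eq, ← star_mulVec, hw, star_zero]
  simp [star_add, add_dotProduct, add_vecMul, dotProduct_add, mulVec_add, hw, dotProduct_mulVec, hwv]

lemma quad_smul {n : ℕ} (M : Matrix (Fin n) (Fin n) ℂ) (r : ℝ) (x : Fin n → ℂ) :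
    star ((r : ℂ) • x) ⬝ᵥ M *ᵥ ((r : ℂ) • x) = ((r^2 : ℝ) : ℂ) * (star x ⬝ᵥ M *ᵥ x) := by
  simp [star_smul, smul_dotProduct, mulVec_smul, dotProduct_smul, smul_eq_mul]
  push_cast
  ring

lemma quad_continuous {n : ℕ} (M : Matrix (Fin n) (Fin n) ℂ) :
    Continuous fun x : Fin n → ℂ => (star x ⬝ᵥ M *ᵥ x).re := by
  apply Complex.continuous_re.comp
  simp only [dotProduct, Matrix.mulVec]
  fun_prop

/-- Key: if supp B ⊆ supp A (ranges), then B ≤ C A. -/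
lemma psd_dominates {n : ℕ} {A B : Matrix (Fin n) (Fin n) ℂ} (hA : A.PosSemidef)
    (hB : B.PosSemidef) (hr : LinearMap.range (toLin' B) ≤ LinearMap.range (toLin' A)) :
    ∃ c : ℝ, 0 < c ∧ (A - (c : ℂ) • B).PosSemidef := by
  classical
  set V : Submodule ℂ (Fin n → ℂ) := LinearMap.range (toLin' A) with hV
  -- kernel of A is contained in kernel of B
  have hker : ∀ w : Fin n → ℂ, A *ᵥ w = 0 → B *ᵥ w = 0 := by
    intro w hw
    have hmem : B *ᵥ w ∈ V := hr ⟨w, by simp [toLin'_apply]⟩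
    obtain ⟨u, hu⟩ := hmem
    rw [toLin'_apply] at hu
    have h0 : star w ⬝ᵥ B *ᵥ w = 0 := by
      have hwv : star w ᵥ* A = 0 := by
        rw [← hA.1.eq, ← star_mulVec, hw, star_zero]
      rw [← hu, dotProduct_mulVec, hwv, zero_dotProduct]
    exact (hB.dotProduct_mulVec_zero_iff w).mp h0
  -- range ∩ kernel = ⊥ for A
  have hdisj : ∀ x : Fin n → ℂ, x ∈ V → A *ᵥ x = 0 → x = 0 := by
    intro x hx hx0
    obtain ⟨y, hy⟩ := hx
    rw [toLin'_apply] at hy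
    have h1 : star x = star y ᵥ* A := by rw [← hy, star_mulVec, hA.1.eq]
    have : star x ⬝ᵥ x = 0 := by
      rw [h1, ← dotProduct_mulVec, hx0, dotProduct_zero]
    exact dotProduct_star_self_eq_zero.mp this
  -- decomposition of the whole space
  have hdecomp : ∀ x : Fin n → ℂ, ∃ v w, v ∈ V ∧ A *ᵥ w = 0 ∧ x = v + w := by
    set K := LinearMap.ker (toLin' A) with hK
    have hinf : V ⊓ K = ⊥ := by
      rw [Submodule.eq_bot_iff]
      intro x hx
      exact hdisj x hx.1 (by simpa [hK, LinearMap.mem_ker, toLin'_apply] using hx.2)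
    have hVK : V ⊔ K = ⊤ := by
      apply Submodule.eq_top_of_finrank_eq
      have h1 := LinearMap.finrank_range_add_finrank_ker (toLin' A)
      rw [← hK, ← hV] at h1
      have h2 := Submodule.finrank_sup_add_finrank_inf_eq V K
      rw [hinf] at h2
      simp only [finrank_bot, add_zero] at h2
      omega
    intro x
    have hx : x ∈ V ⊔ K := hVK ▸ Submodule.mem_top
    obtain ⟨v, hv, w, hw, hvw⟩ := Submodule.mem_sup.mp hx
    exact ⟨v, w, hv, by simpa [hK, LinearMap.mem_ker, toLin'_apply] using hw, hvw.symm⟩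
  by_cases hA0 : A = 0
  · have hB0 : B = 0 := by
      have hrB : LinearMap.range (toLin' B) = ⊥ := by
        rw [← le_bot_iff]
        refine le_trans hr ?_
        rw [hV, hA0]
        simp [Submodule.eq_bot_iff, toLin'_apply]
      have : toLin' B = 0 := LinearMap.range_eq_bot.mp hrB
      have := Matrix.toLin'.injective (this.trans (map_zero (Matrix.toLin')).symm)
      simpa using this
    exact ⟨1, one_pos, by simp [hA0, hB0, Matrix.PosSemidef.zero]⟩
  · -- A ≠ 0, so V ≠ ⊥
    have hVne : ∃ v₀ : Fin n → ℂ, v₀ ∈ V ∧ v₀ ≠ 0 := by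
      by_contra h
      push_neg at h
      apply hA0
      have : toLin' A = 0 := by
        apply LinearMap.ext
        intro x
        exact h _ ⟨x, rfl⟩
      have := Matrix.toLin'.injective (this.trans (map_zero (Matrix.toLin')).symm)
      simpa using this
    obtain ⟨v₀, hv₀, hv₀0⟩ := hVne
    haveI : ProperSpace (Fin n → ℂ) := FiniteDimensional.proper ℂ _
    set s : Set (Fin n → ℂ) := (V : Set (Fin n → ℂ)) ∩ Metric.sphere 0 1 with hs
    have hcpt : IsCompact s := (isCompact_sphere 0 1).inter_left V.closed_of_finiteDimensional
    have hne : s.Nonempty := by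
      refine ⟨((‖v₀‖⁻¹ : ℝ) : ℂ) • v₀, V.smul_mem _ hv₀, ?_⟩
      have hn0 : ‖v₀‖ ≠ 0 := norm_ne_zero_iff.mpr hv₀0
      simp [norm_smul, hn0]
    obtain ⟨x₀, hx₀s, hmin⟩ := hcpt.exists_isMinOn hne (quad_continuous A).continuousOn
    obtain ⟨x₁, hx₁s, hmax⟩ := hcpt.exists_isMaxOn hne (quad_continuous B).continuousOn
    set m := (star x₀ ⬝ᵥ A *ᵥ x₀).re with hm_def
    set Mx := (star x₁ ⬝ᵥ B *ᵥ x₁).re with hMx_def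
    have hre : ∀ (M : Matrix (Fin n) (Fin n) ℂ), M.PosSemidef →
        ∀ x, 0 ≤ (star x ⬝ᵥ M *ᵥ x).re := by
      intro M hM x
      have := hM.dotProduct_mulVec_nonneg x
      rw [Complex.le_def] at this
      simpa using this.1
    have hm : 0 < m := by
      rcases lt_or_eq_of_le (hre A hA x₀) with h | h
      · exact h
      · exfalso
        have h0 : star x₀ ⬝ᵥ A *ᵥ x₀ = 0 := by
          rw [quad_real hA, ← h]
          simp
        have := hdisj x₀ hx₀s.1 ((hA.dotProduct_mulVec_zero_iff x₀).mp h0)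
        have hx1 : ‖x₀‖ = 1 := by simpa using hx₀s.2
        rw [this] at hx1
        simp at hx1
    have hMx : 0 ≤ Mx := hre B hB x₁
    refine ⟨m / (Mx + 1), div_pos hm (by linarith), ?_⟩
    set c : ℝ := m / (Mx + 1) with hc_def
    have hc : 0 < c := div_pos hm (by linarith)
    have hcM : c * Mx ≤ m := by
      rw [hc_def, div_mul_eq_mul_div, div_le_iff₀ (by linarith)]
      nlinarith
    refine Matrix.PosSemidef.of_dotProduct_mulVec_nonneg ?_ ?_
    · show (A - (c : ℂ) • B)ᴴ = A - (c : ℂ) • B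
      rw [conjTranspose_sub, conjTranspose_smul, hA.1.eq, hB.1.eq]
      norm_num
    · intro x
      obtain ⟨v, w, hv, hw, rfl⟩ := hdecomp x
      have hBw := hker w hw
      rw [sub_mulVec, dotProduct_sub, smul_mulVec, dotProduct_smul]
      rw [cross_zero hA.1 v w hw, cross_zero hB.1 v w hBw]
      set a := (star v ⬝ᵥ A *ᵥ v).re with ha_def
      set b := (star v ⬝ᵥ B *ᵥ v).re with hb_def
      rw [quad_real hA v, quad_real hB v]
      have key : c * b ≤ a := by
        by_cases hv0 : v = 0
        · simp [ha_def, hb_def, hv0]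
        · set r : ℝ := ‖v‖ with hr_def
          have hr : 0 < r := norm_pos_iff.mpr hv0
          set u : Fin n → ℂ := ((r⁻¹ : ℝ) : ℂ) • v with hu_def
          have hus : u ∈ s := by
            refine ⟨V.smul_mem _ hv, ?_⟩
            simp [hu_def, norm_smul, hr_def, norm_ne_zero_iff.mpr hv0]
          have hvu : v = ((r : ℝ) : ℂ) • u := by
            rw [hu_def, smul_smul]
            rw [show ((r : ℝ) : ℂ) * ((r⁻¹ : ℝ) : ℂ) = 1 by
              push_cast
              field_simp]
            simp
          have hqa : a = r ^ 2 * (star u ⬝ᵥ A *ᵥ u).re := by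
            rw [ha_def]
            conv_lhs => rw [hvu, quad_smul]
            rw [Complex.re_ofReal_mul]
          have hqb : b = r ^ 2 * (star u ⬝ᵥ B *ᵥ u).re := by
            rw [hb_def]
            conv_lhs => rw [hvu, quad_smul]
            rw [Complex.re_ofReal_mul]
          have h1 : m ≤ (star u ⬝ᵥ A *ᵥ u).re := hmin hus
          have h2 : (star u ⬝ᵥ B *ᵥ u).re ≤ Mx := hmax hus
          have h3 : 0 ≤ (star u ⬝ᵥ B *ᵥ u).re := hre B hB u
          nlinarith [sq_nonneg r, mul_le_mul_of_nonneg_left h1 (sq_nonneg r),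
            mul_le_mul_of_nonneg_left h2 (sq_nonneg r), hc.le, hcM, hr.le]
      rw [smul_eq_mul]
      show (0 : ℂ) ≤ ((a : ℝ) : ℂ) - (c : ℂ) * ((b : ℝ) : ℂ)
      rw [show ((a : ℝ) : ℂ) - (c : ℂ) * ((b : ℝ) : ℂ) = ((a - c * b : ℝ) : ℂ) by push_cast; ring]
      rw [Complex.zero_le_real]
      linarith


lemma psd_smul_real {n : ℕ} {M : Matrix (Fin n) (Fin n) ℂ} (hM : M.PosSemidef) {r : ℝ}
    (hr : 0 ≤ r) : ((r : ℂ) • M).PosSemidef := by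
  refine Matrix.PosSemidef.of_dotProduct_mulVec_nonneg ?_ ?_
  · show ((r : ℂ) • M)ᴴ = (r : ℂ) • M
    rw [conjTranspose_smul, hM.1.eq]
    norm_num
  · intro x
    rw [smul_mulVec, dotProduct_smul, smul_eq_mul]
    exact mul_nonneg (Complex.zero_le_real.mpr hr) (hM.dotProduct_mulVec_nonneg x)

/-- Two extremal invariant states of a quantum dynamical semigroup having
the same support must be equal. -/
theorem extremal_invariant_states_same_support_eq {n : ℕ}
    (Φ : ℝ → Matrix (Fin n) (Fin n) ℂ →ₗ[ℂ] Matrix (Fin n) (Fin n) ℂ)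
    (hsemi : ∀ s t : ℝ, 0 ≤ s → 0 ≤ t → Φ (s + t) = (Φ s).comp (Φ t))
    (hTP : ∀ t : ℝ, 0 ≤ t → ∀ X : Matrix (Fin n) (Fin n) ℂ, (Φ t X).trace = X.trace)
    (hPos : ∀ t : ℝ, 0 ≤ t → ∀ X : Matrix (Fin n) (Fin n) ℂ,
      X.PosSemidef → (Φ t X).PosSemidef)
    (S : Set (Matrix (Fin n) (Fin n) ℂ))
    (hS : S = {ρ | (ρ.PosSemidef ∧ ρ.trace = 1) ∧ ∀ t : ℝ, 0 ≤ t → Φ t ρ = ρ})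
    (ρ₁ ρ₂ : Matrix (Fin n) (Fin n) ℂ)
    (h₁ : ρ₁ ∈ Set.extremePoints ℝ S) (h₂ : ρ₂ ∈ Set.extremePoints ℝ S)
    (hsupp : LinearMap.range (Matrix.toLin' ρ₁) = LinearMap.range (Matrix.toLin' ρ₂)) :
    ρ₁ = ρ₂ := by
  obtain ⟨h₁S, h₁ext⟩ := h₁
  have h₂S := h₂.1
  rw [hS] at h₁S h₂S
  obtain ⟨⟨hρ₁psd, hρ₁tr⟩, hρ₁inv⟩ := h₁S
  obtain ⟨⟨hρ₂psd, hρ₂tr⟩, hρ₂inv⟩ := h₂S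
  obtain ⟨c, hc, hpsd⟩ := psd_dominates hρ₁psd hρ₂psd (le_of_eq hsupp.symm)
  set ε : ℝ := min c 1 with hε_def
  have hε : 0 < ε := lt_min hc one_pos
  have hε1 : ε ≤ 1 := min_le_right _ _
  have hεc : ε ≤ c := min_le_left _ _
  set σ₁ : Matrix (Fin n) (Fin n) ℂ := ρ₁ + (ε : ℂ) • (ρ₁ - ρ₂) with hσ₁_def
  set σ₂ : Matrix (Fin n) (Fin n) ℂ := ρ₁ - (ε : ℂ) • (ρ₁ - ρ₂) with hσ₂_def
  have hσ₁S : σ₁ ∈ S := by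
    rw [hS]
    refine ⟨⟨?_, ?_⟩, ?_⟩
    · have heq : σ₁ = ((ρ₁ - (c : ℂ) • ρ₂) + ((c - ε : ℝ) : ℂ) • ρ₂) + (ε : ℂ) • ρ₁ := by
        rw [hσ₁_def]
        push_cast
        module
      rw [heq]
      exact ((hpsd.add (psd_smul_real hρ₂psd (by linarith))).add (psd_smul_real hρ₁psd hε.le))
    · rw [hσ₁_def]
      rw [trace_add, trace_smul, trace_sub, hρ₁tr, hρ₂tr]
      simp
    · intro t ht
      rw [hσ₁_def, map_add, LinearMap.map_smul, map_sub, hρ₁inv t ht, hρ₂inv t ht]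
  have hσ₂S : σ₂ ∈ S := by
    rw [hS]
    refine ⟨⟨?_, ?_⟩, ?_⟩
    · have heq : σ₂ = ((1 - ε : ℝ) : ℂ) • ρ₁ + (ε : ℂ) • ρ₂ := by
        rw [hσ₂_def]
        push_cast
        module
      rw [heq]
      exact (psd_smul_real hρ₁psd (by linarith)).add (psd_smul_real hρ₂psd hε.le)
    · rw [hσ₂_def]
      rw [trace_sub, trace_smul, trace_sub, hρ₁tr, hρ₂tr]
      simp
    · intro t ht
      rw [hσ₂_def, map_sub, LinearMap.map_smul, map_sub, hρ₁inv t ht, hρ₂inv t ht]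
  have hmem : ρ₁ ∈ openSegment ℝ σ₁ σ₂ := by
    refine ⟨1/2, 1/2, by norm_num, by norm_num, by norm_num, ?_⟩
    rw [hσ₁_def, hσ₂_def]
    module
  have := h₁ext hσ₁S hσ₂S hmem
  have h0 : (ε : ℂ) • (ρ₁ - ρ₂) = 0 := by
    have h1 := this
    rw [hσ₁_def] at h1
    exact add_eq_left.mp h1
  rcases smul_eq_zero.mp h0 with h | h
  · exact absurd (show ε = 0 by exact_mod_cast h) hε.ne'
  · exact sub_eq_zero.mp h
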